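/- Necessity of Ω(m^{3/2}) shortcuts: there exist a constant c > 0 and an integer m₀ such that for every integer m ≥ m₀, every finite set S of shortcuts with diam(S) ≤ 2 + 1/m satisfies |S| ≥ c·m^{3/2}. -/

import Mathlib

open Real MeasureTheory

/-- Arc distance between points on the unit circle, given by their polar angles:
the length of the shorter arc between them. -/
noncomputable def arcDist (p q : ℝ) : ℝ := ⨅ n : ℤ, |p - q + 2 * π * n|

/-- Euclidean length of the chord between the circle points with angles `u` and `v`. -/
noncomputable def chordLen (u v : ℝ) : ℝ := 2 * Real.sin (arcDist u v / 2)

/-- A pair of angles is a genuine shortcut (chord) if its endpoints are distinct points. -/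
def IsShortcut (s : ℝ × ℝ) : Prop := arcDist s.1 s.2 ≠ 0

/-- δ(a) = arcsin(a/2) - a/2. -/
noncomputable def sdelta (a : ℝ) : ℝ := Real.arcsin (a / 2) - a / 2

/-- Cost of a path that starts at `p`, fully traverses the listed chords in order
(travelling along the circle in between), and ends at `q`. -/
noncomputable def walkCost (q : ℝ) : ℝ → List (ℝ × ℝ) → ℝ
  | p, [] => arcDist p q
  | p, e :: L => arcDist p e.1 + chordLen e.1 e.2 + walkCost q e.2 L

/-- Shortest-path distance from `p` to `q` using the shortcuts of `S`
(each usable in either orientation, and always traversed completely). -/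
noncomputable def dS (S : Finset (ℝ × ℝ)) (p q : ℝ) : ℝ :=
  sInf {c | ∃ L : List (ℝ × ℝ), (∀ e ∈ L, e ∈ S ∨ (e.2, e.1) ∈ S) ∧ c = walkCost q p L}

/-- Diameter of the circle augmented with the shortcuts of `S`. -/
noncomputable def diamS (S : Finset (ℝ × ℝ)) : ℝ :=
  sSup {d | ∃ p q : ℝ, d = dS S p q}

/-- diam(k): the optimal diameter achievable with `k` shortcuts. -/
noncomputable def diamK (k : ℕ) : ℝ :=
  sInf {d | ∃ S : Finset (ℝ × ℝ), S.card = k ∧ (∀ s ∈ S, IsShortcut s) ∧ d = diamS S}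

/-- Distance from `p` to `q` when a single shortcut with endpoints `u`, `v` is available. -/
noncomputable def dOne (u v p q : ℝ) : ℝ :=
  min (arcDist p q)
    (min (arcDist p u + chordLen u v + arcDist v q)
      (arcDist p v + chordLen u v + arcDist u q))

/-- Two angles represent the same point of the circle. -/
def SamePoint (p q : ℝ) : Prop := arcDist p q = 0

/-- Two pairs of angles represent the same chord of the circle. -/
def SameChord (s t : ℝ × ℝ) : Prop :=
  (SamePoint s.1 t.1 ∧ SamePoint s.2 t.2) ∨ (SamePoint s.1 t.2 ∧ SamePoint s.2 t.1)

/-- `p` lies in the deep umbra of the shortcut from `u` to `u + β`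
(where `0 < β ≤ π` is the counterclockwise arc spanned by the shortcut):
`p` lies in the inner umbra, and `|p u'| + |s| ≥ d(p, v')` where `u'` is the
endpoint closer to `p` and `v'` the other one. -/
def InDeepUmbra (u β p : ℝ) : Prop :=
  (∃ t : ℝ, sdelta (chordLen u (u + β)) ≤ t ∧ t ≤ β - sdelta (chordLen u (u + β)) ∧
    arcDist p (u + t) = 0) ∧
  (arcDist p u ≤ arcDist p (u + β) →
    arcDist p (u + β) ≤ chordLen p u + chordLen u (u + β)) ∧
  (arcDist p (u + β) ≤ arcDist p u →
    arcDist p u ≤ chordLen p (u + β) + chordLen u (u + β))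

/-- `d` equals δ*_k : for `k ∈ {3,4,5}` this is `δ(a*_k)` where `a*_k + δ(a*_k) = (k-1)π/k`,
and for `k = 6` it is `δ(2) = π/2 - 1`. -/
def dstarSpec (k : ℕ) (d : ℝ) : Prop :=
  (k = 6 ∧ d = sdelta 2) ∨
    (∃ a, a ∈ Set.Icc (0 : ℝ) 2 ∧ a + sdelta a = ((k : ℝ) - 1) * π / k ∧ d = sdelta a)

namespace Stmt6Aux

noncomputable def sav (a : ℝ) : ℝ := a - 2 * Real.sin (a / 2)

lemma bdd (p q : ℝ) : BddBelow (Set.range fun n : ℤ => |p - q + 2 * π * n|) :=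
  ⟨0, by rintro x ⟨n, rfl⟩; exact abs_nonneg _⟩

lemma arcDist_le_n (p q : ℝ) (n : ℤ) : arcDist p q ≤ |p - q + 2 * π * n| :=
  ciInf_le (bdd p q) n

lemma arcDist_nonneg (p q : ℝ) : 0 ≤ arcDist p q :=
  le_ciInf fun _ => abs_nonneg _

lemma arcDist_exists (p q : ℝ) :
    ∃ n : ℤ, arcDist p q = |p - q + 2 * π * n| ∧ |p - q + 2 * π * n| ≤ π := by
  set z := (p - q) / (2 * π) with hz
  have hpi := pi_pos
  have hpq : p - q + 2 * π * ((-round z : ℤ) : ℝ) = 2 * π * (z - round z) := by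
    push_cast
    field_simp [hz]
    have hz2 : π * z * 2 = p - q := by rw [hz]; field_simp
    linarith
  have habs : |p - q + 2 * π * ((-round z : ℤ) : ℝ)| ≤ π := by
    rw [hpq, abs_mul, abs_of_pos (by linarith : (0:ℝ) < 2 * π)]
    have := abs_sub_round z
    nlinarith [abs_nonneg (z - round z)]
  refine ⟨-round z, le_antisymm (arcDist_le_n p q _) (le_ciInf fun k => ?_), habs⟩
  rcases eq_or_ne k (-round z) with rfl | hk
  · exact le_refl _
  · have h1 : (1 : ℝ) ≤ |(k + round z : ℤ)| := by
      have : k + round z ≠ 0 := fun h => hk (by omega)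
      exact_mod_cast Int.one_le_abs (by omega)
    have hsplit : p - q + 2 * π * k =
        (p - q + 2 * π * ((-round z : ℤ) : ℝ)) + 2 * π * ((k + round z : ℤ) : ℝ) := by
      push_cast; ring
    have h2 : |2 * π * ((k + round z : ℤ) : ℝ)| = 2 * π * |((k + round z : ℤ) : ℝ)| := by
      rw [abs_mul, abs_of_pos (by linarith : (0:ℝ) < 2 * π)]
    have h3 : (1:ℝ) ≤ |((k + round z : ℤ) : ℝ)| := by exact_mod_cast h1
    calc |p - q + 2 * π * ((-round z : ℤ) : ℝ)| ≤ π := habs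
    _ ≤ |2 * π * ((k + round z : ℤ) : ℝ)| - |p - q + 2 * π * ((-round z : ℤ) : ℝ)| := by
        rw [h2]; nlinarith
    _ ≤ |p - q + 2 * π * k| := by
        rw [hsplit]
        have := abs_add_le (p - q + 2 * π * ((-round z : ℤ) : ℝ)) (2 * π * ((k + round z : ℤ) : ℝ))
        have h4 : |2 * π * ((k + round z : ℤ) : ℝ)| =
            |(p - q + 2 * π * ((-round z : ℤ) : ℝ)) + 2 * π * ((k + round z : ℤ) : ℝ)
              - (p - q + 2 * π * ((-round z : ℤ) : ℝ))| := by ring_nf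
        linarith [abs_sub (((p - q + 2 * π * ((-round z : ℤ) : ℝ)) + 2 * π * ((k + round z : ℤ) : ℝ))) (p - q + 2 * π * ((-round z : ℤ) : ℝ))]

lemma arcDist_le_pi (p q : ℝ) : arcDist p q ≤ π := by
  obtain ⟨n, h1, h2⟩ := arcDist_exists p q
  linarith [h1.le.trans h2]

lemma arcDist_symm (p q : ℝ) : arcDist p q = arcDist q p := by
  have key : ∀ a b : ℝ, arcDist a b ≤ arcDist b a := by
    intro a b
    obtain ⟨n, h1, _⟩ := arcDist_exists b a
    calc arcDist a b ≤ |a - b + 2 * π * (-n : ℤ)| := arcDist_le_n a b (-n)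
    _ = |b - a + 2 * π * n| := by push_cast; rw [← abs_neg]; ring_nf
    _ = arcDist b a := h1.symm
  exact le_antisymm (key p q) (key q p)

lemma arcDist_triangle (p q r : ℝ) : arcDist p r ≤ arcDist p q + arcDist q r := by
  obtain ⟨a, ha, _⟩ := arcDist_exists p q
  obtain ⟨b, hb, _⟩ := arcDist_exists q r
  calc arcDist p r ≤ |p - r + 2 * π * ((a + b : ℤ) : ℝ)| := arcDist_le_n p r (a + b)
  _ = |(p - q + 2 * π * a) + (q - r + 2 * π * b)| := by push_cast; ring_nf
  _ ≤ |p - q + 2 * π * a| + |q - r + 2 * π * b| := abs_add_le _ _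
  _ = arcDist p q + arcDist q r := by rw [ha, hb]

lemma arcDist_ge_min (p q : ℝ) (h : |p - q| ≤ 2 * π) :
    min |p - q| (2 * π - |p - q|) ≤ arcDist p q := by
  refine le_ciInf fun n => ?_
  rcases eq_or_ne n 0 with rfl | hn
  · simpa using min_le_left |p - q| (2 * π - |p - q|)
  · have h1 : (1:ℝ) ≤ |(n : ℝ)| := by exact_mod_cast Int.one_le_abs hn
    have h2 : 2 * π - |p - q| ≤ |p - q + 2 * π * n| := by
      have habs : |2 * π * (n:ℝ)| = 2 * π * |(n:ℝ)| := by
        rw [abs_mul, abs_of_pos (by linarith [pi_pos] : (0:ℝ) < 2 * π)]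
      have h4 : |2 * π * (n:ℝ)| - |p - q| ≤ |p - q + 2 * π * n| := by
        have := abs_add_le (p - q) (2 * π * (n:ℝ))
        have h5 : |2 * π * (n:ℝ)| ≤ |p - q + 2 * π * n| + |p - q| := by
          calc |2 * π * (n:ℝ)| = |(p - q + 2 * π * n) + -(p - q)| := by ring_nf
          _ ≤ |p - q + 2 * π * n| + |-(p - q)| := abs_add_le _ _
          _ = |p - q + 2 * π * n| + |p - q| := by rw [abs_neg]
        linarith
      nlinarith [pi_pos]
    exact le_trans (min_le_right _ _) h2

lemma arcDist_add_right (p x : ℝ) (hx : 0 ≤ x) (hx' : x ≤ π) : arcDist p (p + x) = x := by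
  have h0 : arcDist p (p + x) ≤ x := by
    have h := arcDist_le_n p (p + x) 0
    have he : p - (p + x) + 2 * π * ((0:ℤ):ℝ) = -x := by push_cast; ring
    rw [he, abs_neg, abs_of_nonneg hx] at h
    exact h
  have h1 : |p - (p + x)| = x := by
    rw [abs_of_nonpos (by linarith : p - (p + x) ≤ 0)]; ring
  have h2 := arcDist_ge_min p (p + x) (by rw [h1]; linarith [pi_pos])
  rw [h1] at h2
  have : min x (2 * π - x) = x := min_eq_left (by linarith [pi_pos])
  linarith [this ▸ h2]

lemma chordLen_nonneg (u v : ℝ) : 0 ≤ chordLen u v := by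
  have h1 := arcDist_nonneg u v
  have h2 := arcDist_le_pi u v
  have h3 := Real.sin_nonneg_of_nonneg_of_le_pi (by linarith : 0 ≤ arcDist u v / 2)
    (by linarith [pi_pos] : arcDist u v / 2 ≤ π)
  unfold chordLen; linarith

lemma sav_nonneg {a : ℝ} (ha : 0 ≤ a) : 0 ≤ sav a := by
  have := Real.sin_le (by linarith : 0 ≤ a / 2)
  unfold sav; linarith

lemma chord_add_sav (u v : ℝ) : chordLen u v + sav (arcDist u v) = arcDist u v := by
  unfold chordLen sav; ring

lemma walkCost_nonneg (q p : ℝ) (L : List (ℝ × ℝ)) : 0 ≤ walkCost q p L := by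
  induction L generalizing p with
  | nil => simpa [walkCost] using arcDist_nonneg p q
  | cons e L ih =>
    simp only [walkCost]
    have h1 := ih e.2
    have h2 := arcDist_nonneg p e.1
    have h3 := chordLen_nonneg e.1 e.2
    linarith

lemma span_le (q p : ℝ) (L : List (ℝ × ℝ)) :
    arcDist p q ≤ walkCost q p L + (L.map fun e => sav (arcDist e.1 e.2)).sum := by
  induction L generalizing p with
  | nil => simp [walkCost]
  | cons e L ih =>
    simp only [walkCost, List.map_cons, List.sum_cons]
    have t1 := arcDist_triangle p e.1 q
    have t2 := arcDist_triangle e.1 e.2 q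
    have t3 := ih e.2
    have hcs := chord_add_sav e.1 e.2
    linarith

lemma chordSum_le (q p : ℝ) (L : List (ℝ × ℝ)) :
    (L.map fun e => chordLen e.1 e.2).sum ≤ walkCost q p L := by
  induction L generalizing p with
  | nil => simpa [walkCost] using arcDist_nonneg p q
  | cons e L ih =>
    simp only [walkCost, List.map_cons, List.sum_cons]
    have h1 := ih e.2
    have h2 := arcDist_nonneg p e.1
    linarith

lemma walkCost_append (q p : ℝ) (L₁ L₂ : List (ℝ × ℝ)) (e : ℝ × ℝ) :
    walkCost q p (L₁ ++ e :: L₂) = walkCost e.1 p L₁ + chordLen e.1 e.2 + walkCost q e.2 L₂ := by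
  induction L₁ generalizing p with
  | nil => simp [walkCost]
  | cons f L₁ ih =>
    simp only [List.cons_append, walkCost]
    rw [ih f.2]
    ring

lemma sin_scale {a b : ℝ} (ha : 0 ≤ a) (hab : a ≤ b) (hb : b ≤ π) :
    a * Real.sin b ≤ b * Real.sin a := by
  rcases eq_or_lt_of_le (ha.trans hab) with hb0 | hb0
  · have ha0 : a = 0 := le_antisymm (hb0 ▸ hab) ha
    simp [ha0, ← hb0]
  · have h1 : 0 ≤ a / b := div_nonneg ha hb0.le
    have h2 : 0 ≤ 1 - a / b := by
      have : a / b ≤ 1 := (div_le_one hb0).2 hab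
      linarith
    have key := strictConcaveOn_sin_Icc.concaveOn.2 (Set.mem_Icc.2 ⟨hb0.le, hb⟩)
        (Set.mem_Icc.2 ⟨le_refl (0:ℝ), pi_pos.le⟩) h1 h2 (by ring)
    simp only [smul_eq_mul, Real.sin_zero, mul_zero, add_zero] at key
    rw [div_mul_cancel₀ a hb0.ne'] at key
    calc a * Real.sin b = b * (a / b * Real.sin b) := by field_simp
    _ ≤ b * Real.sin a := by
        exact mul_le_mul_of_nonneg_left key hb0.le

lemma arc_le_pi_sin {a : ℝ} (ha : 0 ≤ a) (ha' : a ≤ π) : a ≤ π * Real.sin (a / 2) := by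
  have h := Real.mul_le_sin (x := a / 2) (by linarith) (by linarith)
  have hpi := pi_pos
  have h2 := mul_le_mul_of_nonneg_left h pi_pos.le
  have h3 : π * (2 / π * (a / 2)) = a := by field_simp
  rw [h3] at h2
  linarith

lemma sav_le_cube {a : ℝ} (ha : 0 ≤ a) (ha' : a ≤ 1) : sav a ≤ a ^ 3 / 16 := by
  rcases eq_or_lt_of_le ha with h | h
  · simp [sav, ← h]
  · have := Real.sin_gt_sub_cube (x := a / 2) (by linarith)
    unfold sav; nlinarith [pow_nonneg ha 3]

lemma sin_half_ge {A : ℝ} : 1 - (π - A) ^ 2 / 8 ≤ Real.sin (A / 2) := by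
  have h := Real.one_sub_sq_div_two_le_cos (x := π / 2 - A / 2)
  rw [Real.cos_pi_div_two_sub] at h
  nlinarith [h]

end Stmt6Aux


namespace Stmt6Aux2
open Stmt6Aux

section ArithHelpers

lemma sqrt_small {s d : ℝ} (h2 : s ^ 2 = d) (h0 : 0 < s) (hd : d ≤ 1 / 10 ^ 8) :
    s ≤ 1 / 10 ^ 4 := by nlinarith

lemma too_long {x s d W : ℝ} (hpi1 : 3.141592 < π) (hx1 : π - s ≤ x) (hs : s ≤ 1 / 10 ^ 4)
    (hd : d ≤ 1 / 10 ^ 8) (hW : W ≤ 2 + 2 * d) (hxW : x ≤ W) : False := by linarith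

lemma ratio_aux {a A sa sA : ℝ} (h : a / 2 * sA ≤ A / 2 * sa) :
    2 * sA * (a - 2 * sa) ≤ (A - 2 * sA) * (2 * sa) := by nlinarith [h]

lemma key1_aux {x W Sf Sg A sA d : ℝ} (hspan : x ≤ W + Sf)
    (hsum : 2 * sA * Sf ≤ (A - 2 * sA) * Sg) (hSg : Sg ≤ W) (hsA0 : 0 ≤ sA)
    (hAs : 2 * sA ≤ A) (hW' : W ≤ 2 + 2 * d) (hA0 : 0 ≤ A) :
    2 * x * sA ≤ (2 + 2 * d) * A := by
  have t1 : 2 * sA * x ≤ 2 * sA * (W + Sf) := mul_le_mul_of_nonneg_left hspan (by linarith)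
  have t2 : (A - 2 * sA) * Sg ≤ (A - 2 * sA) * W := mul_le_mul_of_nonneg_left hSg (by linarith)
  have t3 : A * W ≤ A * (2 + 2 * d) := mul_le_mul_of_nonneg_left hW' hA0
  nlinarith [t1, t2, t3, hsum]

lemma key2_aux {A x s d sb sA : ℝ} (hpi1 : 3.141592 < π) (hpi2 : π < 3.15)
    (hs2 : s ^ 2 = d) (hspos : 0 < s) (hs : s ≤ 1 / 10 ^ 4)
    (hx1 : π - s ≤ x) (hx0 : 0 ≤ x) (hApos : 0 < A) (hcon : A < π - 3 * s)
    (hsc : A / 2 * sb ≤ (π - 3 * s) / 2 * sA)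
    (hkey : 2 * x * sA ≤ (2 + 2 * d) * A) (hsb : 1 - 9 * d / 8 ≤ sb) : False := by
  have hd0 : 0 < d := by nlinarith
  have hB0 : 0 < π - 3 * s := by linarith
  have u1 : 2 * x * (A / 2 * sb) ≤ 2 * x * ((π - 3 * s) / 2 * sA) :=
    mul_le_mul_of_nonneg_left hsc (by linarith)
  have u2 : (π - 3 * s) * (2 * x * sA) ≤ (π - 3 * s) * ((2 + 2 * d) * A) :=
    mul_le_mul_of_nonneg_left hkey hB0.le
  have hcomb : A * (2 * x * sb) ≤ A * ((2 + 2 * d) * (π - 3 * s)) := by nlinarith [u1, u2]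
  have hfinal : 2 * x * sb ≤ (2 + 2 * d) * (π - 3 * s) := le_of_mul_le_mul_left hcomb hApos
  have hsb0 : (0:ℝ) ≤ 1 - 9 * d / 8 := by nlinarith
  have hx1' : (0:ℝ) ≤ π - s := by linarith
  have hxsb : (π - s) * (1 - 9 * d / 8) ≤ x * sb := mul_le_mul hx1 hsb hsb0 hx0
  nlinarith [hxsb, hfinal, hs2, hspos, hs, hpi1, hpi2, hd0]

lemma sq3_aux {u s : ℝ} (h : u ≤ 3 * s) (h0 : 0 ≤ u) : u ^ 2 ≤ 9 * s ^ 2 := by nlinarith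

lemma point_aux {a ge d : ℝ} (hpi1 : 3.141592 < π) (hpi2 : π < 3.15)
    (hge : ge ≤ 17 * d / 4) (hge0 : 0 ≤ ge) (hd0 : 0 < d) (hd : d ≤ 1 / 10 ^ 8)
    (ha0 : 0 ≤ a) (ha_le : a ≤ π / 2 * ge) : sav a ≤ d * ge := by
  have ha1 : a ≤ 1 := by nlinarith
  have hcube := sav_le_cube ha0 ha1
  have h3 : a ^ 3 ≤ (π / 2) ^ 3 * ge ^ 3 := by
    have h4 := pow_le_pow_left₀ ha0 ha_le 3
    rwa [mul_pow] at h4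
  have hge2 : ge ^ 2 ≤ (17 * d / 4) ^ 2 := pow_le_pow_left₀ hge0 hge 2
  have hg3 : ge ^ 3 ≤ (17 * d / 4) ^ 2 * ge := by
    have h5 := mul_le_mul_of_nonneg_right hge2 hge0
    calc ge ^ 3 = ge ^ 2 * ge := by ring
    _ ≤ (17 * d / 4) ^ 2 * ge := h5
  have hp0 := Real.pi_pos
  have hp2 : π ^ 2 ≤ 10 := by nlinarith [hpi2, hp0]
  have hpi3 : π ^ 3 ≤ 32 := by nlinarith [hp2, hp0, hpi2]
  have h30 : (0:ℝ) ≤ ge ^ 3 := pow_nonneg hge0 3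
  have k1 : (π / 2) ^ 3 * ge ^ 3 ≤ 4 * ge ^ 3 := by nlinarith [hpi3, h30]
  have k2 : (17 * d / 4) ^ 2 * ge ≤ 4 * (d * ge) := by
    have hdge : 0 ≤ d * ge := mul_nonneg hd0.le hge0
    nlinarith [hdge, hd, hd0, hge0]
  linarith [hcube, h3, k1, hg3, k2]

lemma E_aux {S1 S2 W1 W2 d : ℝ} (e1 : S1 ≤ d * W1) (e2 : S2 ≤ d * W2)
    (ht : W1 + W2 ≤ 17 * d / 4) (hd0 : 0 < d) (hd : d ≤ 1 / 10 ^ 8)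
    (hW10 : 0 ≤ W1) (hW20 : 0 ≤ W2) : S1 + S2 ≤ d / 4 := by
  nlinarith [mul_le_mul_of_nonneg_left ht hd0.le]

end ArithHelpers

lemma dS_set_nonempty (S : Finset (ℝ × ℝ)) (p q : ℝ) :
    {c | ∃ L : List (ℝ × ℝ), (∀ e ∈ L, e ∈ S ∨ (e.2, e.1) ∈ S) ∧ c = walkCost q p L}.Nonempty :=
  ⟨arcDist p q, [], by simp, rfl⟩

lemma dS_set_bddBelow (S : Finset (ℝ × ℝ)) (p q : ℝ) :
    BddBelow {c | ∃ L : List (ℝ × ℝ), (∀ e ∈ L, e ∈ S ∨ (e.2, e.1) ∈ S) ∧ c = walkCost q p L} :=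
  ⟨0, by rintro c ⟨L, _, rfl⟩; exact walkCost_nonneg q p L⟩

lemma dS_le_pi (S : Finset (ℝ × ℝ)) (p q : ℝ) : dS S p q ≤ π :=
  le_trans (csInf_le (dS_set_bddBelow S p q) ⟨[], by simp, rfl⟩) (arcDist_le_pi p q)

lemma dS_le_diamS (S : Finset (ℝ × ℝ)) (p q : ℝ) : dS S p q ≤ diamS S :=
  le_csSup ⟨π, by rintro d ⟨p', q', rfl⟩; exact dS_le_pi S p' q'⟩ ⟨p, q, rfl⟩

lemma exists_walk (S : Finset (ℝ × ℝ)) (p q B : ℝ) (h : dS S p q < B) :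
    ∃ L : List (ℝ × ℝ), (∀ e ∈ L, e ∈ S ∨ (e.2, e.1) ∈ S) ∧ walkCost q p L < B := by
  have := (csInf_lt_iff (dS_set_bddBelow S p q) (dS_set_nonempty S p q)).1 h
  obtain ⟨c, ⟨L, hL, rfl⟩, hc⟩ := this
  exact ⟨L, hL, hc⟩

lemma exists_max {α : Type*} (f : α → ℝ) (L : List α) (h : L ≠ []) :
    ∃ e ∈ L, ∀ e' ∈ L, f e' ≤ f e := by
  induction L with
  | nil => simp at h
  | cons x xs ih =>
    rcases eq_or_ne xs [] with rfl | hxs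
    · exact ⟨x, by simp, by simp⟩
    · obtain ⟨a, ha, hmax⟩ := ih hxs
      rcases le_total (f a) (f x) with hc | hc
      · refine ⟨x, List.mem_cons_self, fun e' he' => ?_⟩
        rcases List.mem_cons.1 he' with rfl | h'
        · exact le_refl _
        · exact (hmax _ h').trans hc
      · refine ⟨a, List.mem_cons_of_mem _ ha, fun e' he' => ?_⟩
        rcases List.mem_cons.1 he' with rfl | h'
        · exact hc
        · exact hmax _ h'

set_option maxHeartbeats 2000000 in
/-- The key geometric lemma: every nearly-antipodal pair must be served by a
nearly-diametral shortcut positioned within `5 δ`. -/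
lemma serve (S : Finset (ℝ × ℝ)) (δ : ℝ) (hδ0 : 0 < δ) (hδ : δ ≤ 1 / 10 ^ 8)
    (hdiam : diamS S ≤ 2 + δ) (p x : ℝ)
    (hx1 : π - Real.sqrt δ ≤ x) (hx2 : x ≤ π) :
    ∃ e ∈ S, (arcDist p e.1 ≤ 5 * δ ∨ arcDist p e.2 ≤ 5 * δ) ∧
      |x - arcDist e.1 e.2| ≤ 5 * δ := by
  have hpi1 := Real.pi_gt_d6
  have hpi2 := Real.pi_lt_d2
  set s : ℝ := Real.sqrt δ with hs_def
  have hs2 : s ^ 2 = δ := Real.sq_sqrt hδ0.le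
  have hspos : 0 < s := Real.sqrt_pos.2 hδ0
  have hs : s ≤ 1 / 10 ^ 4 := sqrt_small hs2 hspos hδ
  have hx0 : 0 ≤ x := by linarith
  set q : ℝ := p + x with hq_def
  have harc : arcDist p q = x := arcDist_add_right p x hx0 hx2
  have hdS : dS S p q < 2 + 2 * δ := lt_of_le_of_lt (le_trans (dS_le_diamS S p q) hdiam) (by linarith)
  obtain ⟨L, hLS, hW⟩ := exists_walk S p q (2 + 2 * δ) hdS
  set W : ℝ := walkCost q p L with hW_def
  have hW' : W ≤ 2 + 2 * δ := hW.le
  have hW0 : 0 ≤ W := walkCost_nonneg q p L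
  set f : ℝ × ℝ → ℝ := fun e => sav (arcDist e.1 e.2) with hf_def
  set g : ℝ × ℝ → ℝ := fun e => chordLen e.1 e.2 with hg_def
  have hspan : x ≤ W + (L.map f).sum := by
    have := span_le q p L
    rw [harc] at this
    exact this
  have hf0 : ∀ e ∈ L, 0 ≤ f e := fun e _ => sav_nonneg (arcDist_nonneg e.1 e.2)
  have hsumf0 : 0 ≤ (L.map f).sum := by
    apply List.sum_nonneg
    intro y hy
    obtain ⟨e, he, rfl⟩ := List.mem_map.1 hy
    exact hf0 e he
  have hLne : L ≠ [] := by
    intro h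
    have hx' : W = x := by rw [hW_def, h]; exact harc
    exact too_long hpi1 hx1 hs hδ hW' hx'.ge
  obtain ⟨estar, hestar, hmax⟩ := exists_max (fun e => arcDist e.1 e.2) L hLne
  set A : ℝ := arcDist estar.1 estar.2 with hA_def
  have hA0 : 0 ≤ A := arcDist_nonneg _ _
  have hAπ : A ≤ π := arcDist_le_pi _ _
  have hApos : 0 < A := by
    rcases hA0.eq_or_lt with h0 | h
    · exfalso
      have hzero : (L.map f).sum = 0 := by
        apply List.sum_eq_zero
        rintro y hy
        obtain ⟨e, he, rfl⟩ := List.mem_map.1 hy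
        have h1 : arcDist e.1 e.2 ≤ A := hmax e he
        have h2 : arcDist e.1 e.2 = 0 := by
          rw [← h0] at h1
          exact le_antisymm h1 (arcDist_nonneg _ _)
        simp [hf_def, sav, h2]
      have hxW : x ≤ W := by
        have h5 := hzero ▸ hspan
        linarith [h5]
      exact too_long hpi1 hx1 hs hδ hW' hxW
    · exact h
  have hsinA0 : 0 ≤ Real.sin (A / 2) :=
    Real.sin_nonneg_of_nonneg_of_le_pi (by linarith) (by linarith)
  have hAs : 2 * Real.sin (A / 2) ≤ A := by
    have := sav_nonneg hA0
    unfold sav at this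
    linarith
  -- pointwise savings/chord ratio bound
  have hratio : ∀ e ∈ L, 2 * Real.sin (A / 2) * f e ≤ (A - 2 * Real.sin (A / 2)) * g e := by
    intro e he
    have hae0 : 0 ≤ arcDist e.1 e.2 := arcDist_nonneg _ _
    have haeA : arcDist e.1 e.2 ≤ A := hmax e he
    have hsc := sin_scale (a := arcDist e.1 e.2 / 2) (b := A / 2)
      (by linarith) (by linarith) (by linarith)
    simp only [hf_def, hg_def]
    have := ratio_aux (sa := Real.sin (arcDist e.1 e.2 / 2)) (sA := Real.sin (A / 2)) hsc
    simp only [sav, chordLen]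
    linarith [this]
  have hsum : 2 * Real.sin (A / 2) * (L.map f).sum ≤ (A - 2 * Real.sin (A / 2)) * (L.map g).sum := by
    have h1 : (L.map fun e => 2 * Real.sin (A / 2) * f e).sum ≤
        (L.map fun e => (A - 2 * Real.sin (A / 2)) * g e).sum :=
      List.sum_le_sum hratio
    rwa [List.sum_map_mul_left, List.sum_map_mul_left] at h1
  have hsumg : (L.map g).sum ≤ W := chordSum_le q p L
  -- KEY1 : 2 x sin(A/2) ≤ (2+2δ) A
  have key1 : 2 * x * Real.sin (A / 2) ≤ (2 + 2 * δ) * A := by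
    exact key1_aux hspan hsum hsumg hsinA0 hAs hW' hA0
  -- KEY2 : A ≥ π - 3 s
  have key2 : π - 3 * s ≤ A := by
    by_contra hcon
    push_neg at hcon
    have hB0 : 0 < π - 3 * s := by linarith
    have hsc := sin_scale (a := A / 2) (b := (π - 3 * s) / 2)
      (by linarith) (by linarith) (by linarith)
    -- hsc : A/2 * sin((π-3s)/2) ≤ (π-3s)/2 * sin(A/2)
    have hsinlb : 1 - 9 * δ / 8 ≤ Real.sin ((π - 3 * s) / 2) := by
      have h := sin_half_ge (A := π - 3 * s)
      have he : (π - (π - 3 * s)) ^ 2 / 8 = 9 * δ / 8 := by rw [← hs2]; ring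
      linarith [he ▸ h]
    exact key2_aux hpi1 hpi2 hs2 hspos hs hx1 hx0 hApos hcon hsc key1 hsinlb
  -- the main shortcut is nearly diametral
  have hcstar : 2 - 9 * δ / 4 ≤ chordLen estar.1 estar.2 := by
    have h1 : 1 - (π - A) ^ 2 / 8 ≤ Real.sin (A / 2) := sin_half_ge
    have h2 : (π - A) ^ 2 ≤ 9 * δ := by
      have hu := sq3_aux (u := π - A) (s := s) (by linarith [key2]) (by linarith [hAπ])
      have h9 : (9:ℝ) * s ^ 2 = 9 * δ := by rw [hs2]
      linarith [hu, h9]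
    unfold chordLen
    rw [← hA_def]
    linarith [h1, h2]
  obtain ⟨L₁, L₂, hLsplit⟩ := List.append_of_mem hestar
  set W₁ : ℝ := walkCost estar.1 p L₁ with hW₁_def
  set W₂ : ℝ := walkCost q estar.2 L₂ with hW₂_def
  have hWsplit : W = W₁ + chordLen estar.1 estar.2 + W₂ := by
    rw [hW_def, hLsplit]; exact walkCost_append q p L₁ L₂ estar
  have hW₁0 : 0 ≤ W₁ := walkCost_nonneg _ _ _
  have hW₂0 : 0 ≤ W₂ := walkCost_nonneg _ _ _
  have ht : W₁ + W₂ ≤ 17 * δ / 4 := by linarith [hcstar, hW']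
  have hsumg1 : (L₁.map g).sum ≤ W₁ := chordSum_le estar.1 p L₁
  have hsumg2 : (L₂.map g).sum ≤ W₂ := chordSum_le q estar.2 L₂
  have hside : ∀ (M : List (ℝ × ℝ)) (WM : ℝ), 0 ≤ WM → WM ≤ 17 * δ / 4 →
      (M.map g).sum ≤ WM → (M.map f).sum ≤ δ * WM := by
    intro M WM hWM0 hWM hMg
    have hg0 : ∀ y ∈ M.map g, 0 ≤ y := by
      intro y hy; obtain ⟨e, he, rfl⟩ := List.mem_map.1 hy; exact chordLen_nonneg e.1 e.2
    have hpoint : ∀ e ∈ M, f e ≤ δ * g e := by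
      intro e he
      have hge : g e ≤ 17 * δ / 4 :=
        le_trans (List.single_le_sum hg0 _ (List.mem_map_of_mem (f := g) he)) (hMg.trans hWM)
      have hge0 : 0 ≤ g e := chordLen_nonneg e.1 e.2
      have hae0 : 0 ≤ arcDist e.1 e.2 := arcDist_nonneg _ _
      have haeπ : arcDist e.1 e.2 ≤ π := arcDist_le_pi _ _
      have ha_le : arcDist e.1 e.2 ≤ π / 2 * g e := by
        have h1 := arc_le_pi_sin hae0 haeπ
        simp only [hg_def, chordLen]
        linarith
      exact point_aux hpi1 hpi2 hge hge0 hδ0 hδ hae0 ha_le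
    calc (M.map f).sum ≤ (M.map fun e => δ * g e).sum := List.sum_le_sum hpoint
    _ = δ * (M.map g).sum := List.sum_map_mul_left M g δ
    _ ≤ δ * WM := mul_le_mul_of_nonneg_left hMg hδ0.le
  have hE : (L₁.map f).sum + (L₂.map f).sum ≤ δ / 4 := by
    have e1 := hside L₁ W₁ hW₁0 (by linarith) hsumg1
    have e2 := hside L₂ W₂ hW₂0 (by linarith) hsumg2
    exact E_aux e1 e2 ht hδ0 hδ hW₁0 hW₂0
  have hf0' : ∀ e : ℝ × ℝ, 0 ≤ f e := fun e => sav_nonneg (arcDist_nonneg e.1 e.2)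
  have hS1 : 0 ≤ (L₁.map f).sum := by
    apply List.sum_nonneg; intro y hy
    obtain ⟨e, _, rfl⟩ := List.mem_map.1 hy; exact hf0' e
  have hS2 : 0 ≤ (L₂.map f).sum := by
    apply List.sum_nonneg; intro y hy
    obtain ⟨e, _, rfl⟩ := List.mem_map.1 hy; exact hf0' e
  have hsum_split : (L.map f).sum = (L₁.map f).sum + f estar + (L₂.map f).sum := by
    rw [hLsplit, List.map_append, List.sum_append, List.map_cons, List.sum_cons]; ring
  have hfe : chordLen estar.1 estar.2 + f estar = A := chord_add_sav estar.1 estar.2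
  have hup : x ≤ A + 5 * δ := by linarith [hspan, hWsplit, hsum_split, hE, ht, hfe]
  have hb1 : arcDist p estar.1 ≤ W₁ + (L₁.map f).sum := span_le estar.1 p L₁
  have hb2 : arcDist estar.2 q ≤ W₂ + (L₂.map f).sum := span_le q estar.2 L₂
  have hpos1 : arcDist p estar.1 ≤ 5 * δ := by linarith [hb1, ht, hE, hW₂0, hS2, hδ0]
  have hlow : A ≤ x + 5 * δ := by
    have t1 := arcDist_triangle estar.1 q estar.2
    have t2 := arcDist_triangle estar.1 p q
    have s1 : arcDist estar.1 p = arcDist p estar.1 := arcDist_symm _ _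
    have s2 : arcDist q estar.2 = arcDist estar.2 q := arcDist_symm _ _
    rw [harc] at t2
    linarith [hb1, hb2, ht, hE, hδ0]
  have habs : |x - A| ≤ 5 * δ := abs_le.2 ⟨by linarith, by linarith⟩
  rcases hLS estar hestar with hmem | hmem
  · exact ⟨estar, hmem, Or.inl hpos1, habs⟩
  · refine ⟨(estar.2, estar.1), hmem, Or.inr hpos1, ?_⟩
    show |x - arcDist estar.2 estar.1| ≤ 5 * δ
    have hsymm : arcDist estar.2 estar.1 = A := arcDist_symm estar.2 estar.1
    rw [hsymm]
    exact habs

end Stmt6Aux2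


namespace Stmt6Aux3
open Stmt6Aux Stmt6Aux2

section ArithHelpers2

lemma r4_aux {r m : ℝ} (h2 : r ^ 2 = m) (h8 : 10 ^ 8 ≤ m) (h0 : 0 ≤ r) : 10 ^ 4 ≤ r := by
  nlinarith

lemma scale_ge {c u : ℝ} (h1 : 1 ≤ u) (hc : 0 < c) : c ≤ u * c := by nlinarith

lemma count_aux {r m Ni Nj Sc : ℝ} (hr2 : r ^ 2 = m) (hr4 : 10 ^ 4 ≤ r)
    (hm8 : 10 ^ 8 ≤ m) (hcast : Ni * Nj ≤ 2 * Sc) (hNiR : (r - 12) / 11 ≤ Ni)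
    (hNjR : (m - 1) / 2 ≤ Nj) : 1 / 100 * (m * r) ≤ Sc := by
  have hm0 : (0:ℝ) < m := by nlinarith
  have hr0 : (0:ℝ) < r := by nlinarith
  have hNi0 : (0:ℝ) ≤ (r - 12) / 11 := by linarith
  have hNj0 : (0:ℝ) ≤ (m - 1) / 2 := by linarith
  have hprod : ((r - 12) / 11) * ((m - 1) / 2) ≤ Ni * Nj :=
    mul_le_mul hNiR hNjR hNj0 (le_trans hNi0 hNiR)
  have e1 : 600 * m ≤ 7 / 100 * (m * r) := by nlinarith
  have e2 : 12 * r ≤ 1 / 100 * (m * r) := by nlinarith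
  nlinarith [hcast, hprod, e1, e2]

end ArithHelpers2

lemma nat_abs_ge_one {a b : ℕ} (h : a ≠ b) : 1 ≤ |(a:ℝ) - b| := by
  have h1 : ((a:ℤ) - b) ≠ 0 := sub_ne_zero.2 (by exact_mod_cast h)
  have h2 : (1:ℤ) ≤ |(a:ℤ) - b| := Int.one_le_abs h1
  calc (1:ℝ) = ((1:ℤ):ℝ) := by norm_num
  _ ≤ ((|(a:ℤ) - b| : ℤ) : ℝ) := by exact_mod_cast h2
  _ = |(a:ℝ) - b| := by push_cast; ring_nf

set_option maxHeartbeats 2000000 in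
theorem stmt6' :
    ∃ c : ℝ, 0 < c ∧ ∃ m₀ : ℕ, ∀ m : ℕ, m₀ ≤ m →
      ∀ S : Finset (ℝ × ℝ), (∀ s ∈ S, IsShortcut s) →
        diamS S ≤ 2 + 1 / (m : ℝ) →
        c * (m : ℝ) ^ ((3 : ℝ) / 2) ≤ (S.card : ℝ) := by
  classical
  refine ⟨1/100, by norm_num, 10^8, ?_⟩
  intro m hm S _ hdiam
  have hpi1 := Real.pi_gt_d6
  have hpi2 := Real.pi_lt_d2
  have hm8 : (10:ℝ)^8 ≤ (m:ℝ) := by exact_mod_cast hm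
  have hm0 : (0:ℝ) < (m:ℝ) := by linarith
  set δ : ℝ := 1 / (m:ℝ) with hδ_def
  have hδ0 : 0 < δ := by positivity
  have hδ : δ ≤ 1 / 10 ^ 8 := by
    rw [hδ_def]
    exact one_div_le_one_div_of_le (by norm_num) hm8
  have hδm : δ * (m:ℝ) = 1 := by rw [hδ_def]; field_simp
  -- square root facts
  set r : ℝ := Real.sqrt (m:ℝ) with hr_def
  have hr2 : r ^ 2 = (m:ℝ) := Real.sq_sqrt hm0.le
  have hr0 : 0 < r := Real.sqrt_pos.2 hm0
  have hr4 : (10:ℝ)^4 ≤ r := r4_aux hr2 hm8 hr0.le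
  have hsd : Real.sqrt δ = 1 / r := by
    rw [hδ_def, hr_def, one_div, one_div, ← Real.sqrt_inv]
  have hrδ : r * δ = 1 / r := by
    rw [eq_div_iff hr0.ne', hδ_def]
    field_simp
    nlinarith [hr2]
  -- natural sqrt facts
  set k : ℕ := Nat.sqrt m with hk_def
  have hk1 : (k:ℝ) ≤ r := by
    have h1 : k ^ 2 ≤ m := Nat.sqrt_le' m
    have h2 : ((k:ℝ)) ^ 2 ≤ (m:ℝ) := by exact_mod_cast h1
    nlinarith [Nat.cast_nonneg (α := ℝ) k, hr2, hr0.le]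
  have hk2 : r - 1 ≤ (k:ℝ) := by
    have h1 : m < (k+1) * (k+1) := Nat.lt_succ_sqrt m
    have h2 : (m:ℝ) < ((k:ℝ)+1) * ((k:ℝ)+1) := by exact_mod_cast h1
    nlinarith [Nat.cast_nonneg (α := ℝ) k]
  -- grid dimensions
  set Ni : ℕ := k / 11 with hNi_def
  set Nj : ℕ := m / 2 with hNj_def
  set G : Finset (ℕ × ℕ) := Finset.range Ni ×ˢ Finset.range Nj with hG_def
  set P : ℕ × ℕ → ℝ := fun v => (v.2 : ℝ) * (11 * δ) with hP_def
  set X : ℕ × ℕ → ℝ := fun v => π - (v.1 : ℝ) * (11 * δ) with hX_def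
  -- each grid point is served by some shortcut of S
  have hserve : ∀ v ∈ G, ∃ e ∈ S,
      (arcDist (P v) e.1 ≤ 5 * δ ∨ arcDist (P v) e.2 ≤ 5 * δ) ∧
        |X v - arcDist e.1 e.2| ≤ 5 * δ := by
    intro v hv
    have hv1 : v.1 < Ni := Finset.mem_range.1 (Finset.mem_product.1 hv).1
    have hi : (v.1 : ℝ) * (11 * δ) ≤ Real.sqrt δ := by
      have h1 : 11 * (v.1 + 1) ≤ k := by
        calc 11 * (v.1 + 1) ≤ 11 * Ni := Nat.mul_le_mul_left 11 hv1
        _ = (k / 11) * 11 := by rw [hNi_def, mul_comm]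
        _ ≤ k := Nat.div_mul_le_self k 11
      have h2 : (11:ℝ) * ((v.1:ℝ) + 1) ≤ (k:ℝ) := by exact_mod_cast h1
      have h3 : (11:ℝ) * v.1 ≤ r := by linarith [hk1]
      have h5 : (11 * (v.1:ℝ)) * δ ≤ r * δ := mul_le_mul_of_nonneg_right h3 hδ0.le
      rw [hsd]
      calc (v.1 : ℝ) * (11 * δ) = (11 * (v.1:ℝ)) * δ := by ring
      _ ≤ r * δ := h5
      _ = 1 / r := hrδ
    have hiv0 : 0 ≤ (v.1 : ℝ) * (11 * δ) :=
      mul_nonneg (Nat.cast_nonneg _) (by linarith)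
    have hx2 : X v ≤ π := by rw [hX_def]; simp only; linarith
    have hx1 : π - Real.sqrt δ ≤ X v := by rw [hX_def]; simp only; linarith
    exact serve S δ hδ0 hδ hdiam (P v) (X v) hx1 hx2
  -- choice of serving shortcut
  have hFex : ∀ v : ℕ × ℕ, ∃ e : ℝ × ℝ, v ∈ G → (e ∈ S ∧
      ((arcDist (P v) e.1 ≤ 5 * δ ∨ arcDist (P v) e.2 ≤ 5 * δ) ∧
        |X v - arcDist e.1 e.2| ≤ 5 * δ)) := by
    intro v
    by_cases hv : v ∈ G
    · obtain ⟨e, he, hQ⟩ := hserve v hv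
      exact ⟨e, fun _ => ⟨he, hQ⟩⟩
    · exact ⟨(0,0), fun h => absurd h hv⟩
  choose F hF using hFex
  -- every fiber has at most 2 grid points
  have hfiber : ∀ e ∈ S, (G.filter (fun v => F v = e)).card ≤ 2 := by
    intro e _
    have hcard2 : ({0, 1} : Finset ℕ).card = 2 := by norm_num
    rw [← hcard2]
    apply Finset.card_le_card_of_injOn
      (fun v => if arcDist (P v) e.1 ≤ 5 * δ then (0:ℕ) else 1)
    · intro v _
      dsimp only; split_ifs <;> simp
    · intro v hv v' hv' heq
      simp only [Finset.coe_filter, Set.mem_setOf_eq, Finset.mem_filter] at hv hv'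
      obtain ⟨hvG, hvF⟩ := hv
      obtain ⟨hv'G, hv'F⟩ := hv'
      have hQ := (hF v hvG).2
      rw [hvF] at hQ
      have hQ' := (hF v' hv'G).2
      rw [hv'F] at hQ'
      -- first coordinates are equal
      have hieq : v.1 = v'.1 := by
        by_contra hne
        have h1 := hQ.2
        have h2 := hQ'.2
        have habs : |X v - X v'| ≤ 10 * δ := by
          calc |X v - X v'| = |(X v - arcDist e.1 e.2) - (X v' - arcDist e.1 e.2)| := by ring_nf
          _ ≤ |X v - arcDist e.1 e.2| + |X v' - arcDist e.1 e.2| := abs_sub _ _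
          _ ≤ 10 * δ := by linarith
        have hre : X v - X v' = ((v'.1:ℝ) - v.1) * (11 * δ) := by rw [hX_def]; ring
        have hge := nat_abs_ge_one (fun h : v'.1 = v.1 => hne h.symm)
        have hsep : 11 * δ ≤ |X v - X v'| := by
          rw [hre, abs_mul, abs_of_pos (by linarith : (0:ℝ) < 11 * δ)]
          exact scale_ge hge (by linarith)
        linarith
      -- second coordinates are equal
      have hjeq : v.2 = v'.2 := by
        by_contra hne
        have hcases : (arcDist (P v) e.1 ≤ 5 * δ ∧ arcDist (P v') e.1 ≤ 5 * δ) ∨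
            (arcDist (P v) e.2 ≤ 5 * δ ∧ arcDist (P v') e.2 ≤ 5 * δ) := by
          by_cases hb : arcDist (P v) e.1 ≤ 5 * δ <;>
            by_cases hb' : arcDist (P v') e.1 ≤ 5 * δ
          · exact Or.inl ⟨hb, hb'⟩
          · exfalso; simp [hb, hb'] at heq
          · exfalso; simp [hb, hb'] at heq
          · exact Or.inr ⟨hQ.1.resolve_left hb, hQ'.1.resolve_left hb'⟩
        obtain ⟨w, hw1, hw2⟩ : ∃ w, arcDist (P v) w ≤ 5 * δ ∧ arcDist (P v') w ≤ 5 * δ := by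
          rcases hcases with ⟨h1, h2⟩ | ⟨h1, h2⟩
          exacts [⟨e.1, h1, h2⟩, ⟨e.2, h1, h2⟩]
        have htri : arcDist (P v) (P v') ≤ 10 * δ := by
          have t := arcDist_triangle (P v) w (P v')
          have s := arcDist_symm w (P v')
          rw [s] at t
          linarith
        -- separation of distinct grid points
        have hvj : v.2 < Nj := Finset.mem_range.1 (Finset.mem_product.1 hvG).2
        have hv'j : v'.2 < Nj := Finset.mem_range.1 (Finset.mem_product.1 hv'G).2
        have hNjle : (Nj:ℝ) ≤ (m:ℝ) / 2 := by rw [hNj_def]; exact Nat.cast_div_le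
        have hPd : P v - P v' = ((v.2:ℝ) - v'.2) * (11 * δ) := by rw [hP_def]; ring
        have hPb : |P v - P v'| ≤ 11 / 2 := by
          rw [hPd, abs_mul, abs_of_pos (by linarith : (0:ℝ) < 11 * δ)]
          have hb1 : |(v.2:ℝ) - v'.2| ≤ (m:ℝ) / 2 := by
            rw [abs_le]
            constructor
            · have : (v'.2:ℝ) ≤ Nj := by
                have := hv'j.le
                exact_mod_cast this
              have h0 : (0:ℝ) ≤ (v.2:ℝ) := Nat.cast_nonneg _
              linarith
            · have : (v.2:ℝ) ≤ Nj := by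
                have := hvj.le
                exact_mod_cast this
              have h0 : (0:ℝ) ≤ (v'.2:ℝ) := Nat.cast_nonneg _
              linarith
          calc |(v.2:ℝ) - v'.2| * (11 * δ) ≤ ((m:ℝ)/2) * (11 * δ) :=
            mul_le_mul_of_nonneg_right hb1 (by linarith)
          _ = 11 / 2 := by linear_combination (11 / 2) * hδm
        have hge := nat_abs_ge_one hne
        have hPs : 11 * δ ≤ |P v - P v'| := by
          rw [hPd, abs_mul, abs_of_pos (by linarith : (0:ℝ) < 11 * δ)]
          exact scale_ge hge (by linarith)
        have hmin := arcDist_ge_min (P v) (P v') (by linarith : |P v - P v'| ≤ 2 * π)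
        have h2π : 11 * δ ≤ 2 * π - |P v - P v'| := by linarith
        have : 11 * δ ≤ arcDist (P v) (P v') := le_trans (le_min hPs h2π) hmin
        linarith
      exact Prod.ext hieq hjeq
  -- counting
  have hcount : G.card ≤ 2 * S.card := by
    rw [Finset.card_eq_sum_card_fiberwise (fun v hv => (hF v hv).1)]
    calc ∑ e ∈ S, (G.filter (fun v => F v = e)).card ≤ ∑ _e ∈ S, 2 :=
      Finset.sum_le_sum hfiber
    _ = 2 * S.card := by rw [Finset.sum_const, smul_eq_mul, mul_comm]
  have hGcard : G.card = Ni * Nj := by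
    rw [hG_def, Finset.card_product, Finset.card_range, Finset.card_range]
  -- cast to reals and conclude
  have hcast : (Ni:ℝ) * (Nj:ℝ) ≤ 2 * (S.card:ℝ) := by
    have := hGcard ▸ hcount
    exact_mod_cast this
  have hNiR : (r - 12) / 11 ≤ (Ni:ℝ) := by
    have h1 : k = 11 * Ni + k % 11 := by rw [hNi_def]; exact (Nat.div_add_mod k 11).symm ▸ rfl
    have h2 : k % 11 < 11 := Nat.mod_lt _ (by norm_num)
    have h3 : (k:ℝ) ≤ 11 * (Ni:ℝ) + 10 := by
      have : k ≤ 11 * Ni + 10 := by omega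
      exact_mod_cast this
    linarith [hk2]
  have hNjR : ((m:ℝ) - 1) / 2 ≤ (Nj:ℝ) := by
    have h1 : m ≤ 2 * Nj + 1 := by rw [hNj_def]; omega
    have h2 : (m:ℝ) ≤ 2 * (Nj:ℝ) + 1 := by exact_mod_cast h1
    linarith
  have hrpow : (m:ℝ) ^ ((3:ℝ)/2) = (m:ℝ) * r := by
    have h1 : ((3:ℝ)/2) = 1 + 1/2 := by norm_num
    rw [h1, Real.rpow_add hm0, Real.rpow_one, hr_def, Real.sqrt_eq_rpow]
  rw [hrpow]
  exact count_aux hr2 hr4 hm8 hcast hNiR hNjR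

end Stmt6Aux3


/-- `Ω(m^{3/2})` shortcuts are necessary for diameter `2 + 1/m`. -/
theorem stmt6 :
    ∃ c : ℝ, 0 < c ∧ ∃ m₀ : ℕ, ∀ m : ℕ, m₀ ≤ m →
      ∀ S : Finset (ℝ × ℝ), (∀ s ∈ S, IsShortcut s) →
        diamS S ≤ 2 + 1 / (m : ℝ) →
        c * (m : ℝ) ^ ((3 : ℝ) / 2) ≤ (S.card : ℝ) := by
  exact Stmt6Aux3.stmt6'
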